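/- Fix integers n, m, l ≥ 1 and real matrices E ∈ ℝ^{n×n}, F ∈ ℝ^{n×m}, G ∈ ℝ^{n×l}, and let a = (a_0, …, a_{n−1}) ∈ ℝ^{1×n} be a row vector satisfying E^n = a_0 I_n + a_1 E + ⋯ + a_{n−1} E^{n−1}. Assume that rank(F_y − (a ⊗ I_n) M̃_y) = n and that a ≠ 0. Then the estimation matrix L_est ∈ ℝ^{(n+m)×(m+l)n} has full row rank n + m. (Full row rank of the estimation matrix, used in the proof of Theorem 3; it suggests that the internal representation generated by L_est is of minimal dimension.) -/
import Mathlib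


open Matrix

noncomputable section

namespace LQGPaper

variable {n m l : ℕ}

/-- Row block matrix `(E^{n-1}B, E^{n-2}B, …, B) ∈ ℝ^{n×nk}`. -/
def Frow {k : ℕ} (E : Matrix (Fin n) (Fin n) ℝ) (B : Matrix (Fin n) (Fin k) ℝ) :
    Matrix (Fin n) (Fin n × Fin k) ℝ :=
  Matrix.of fun i q => (E ^ (n - 1 - (q.1 : ℕ)) * B) i q.2

/-- Strictly block-lower-triangular matrix (`M̃_u`/`M̃_y` style) whose `(i,j)` block
(0-indexed, blocks of size `n × k`) is `E^{i-j-1} B` for `i > j` and `0` otherwise. -/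
def Mlow {k : ℕ} (E : Matrix (Fin n) (Fin n) ℝ) (B : Matrix (Fin n) (Fin k) ℝ) :
    Matrix (Fin n × Fin n) (Fin n × Fin k) ℝ :=
  Matrix.of fun p q =>
    if (q.1 : ℕ) < (p.1 : ℕ) then (E ^ ((p.1 : ℕ) - (q.1 : ℕ) - 1) * B) p.2 q.2 else 0

/-- Strictly block-lower-triangular matrix (`M_u`/`M_y` style) whose `(i,j)` block
(0-indexed, blocks of size `m × k`) is `H E^{i-j-1} B` for `i > j` and `0` otherwise. -/
def MlowH {k : ℕ} (E : Matrix (Fin n) (Fin n) ℝ) (B : Matrix (Fin n) (Fin k) ℝ)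
    (H : Matrix (Fin m) (Fin n) ℝ) :
    Matrix (Fin n × Fin m) (Fin n × Fin k) ℝ :=
  Matrix.of fun p q =>
    if (q.1 : ℕ) < (p.1 : ℕ) then (H * E ^ ((p.1 : ℕ) - (q.1 : ℕ) - 1) * B) p.2 q.2 else 0

/-- The block column `F_x = (H; HE; …; HE^{n-1}) ∈ ℝ^{mn×n}`. -/
def Fx (E : Matrix (Fin n) (Fin n) ℝ) (H : Matrix (Fin m) (Fin n) ℝ) :
    Matrix (Fin n × Fin m) (Fin n) ℝ :=
  Matrix.of fun p j => (H * E ^ (p.1 : ℕ)) p.2 j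

/-- The selection matrix `P_i = I_n ⊗ e_iᵀ ∈ ℝ^{n×nm}`. -/
def Pmat (n : ℕ) {m : ℕ} (i : Fin m) : Matrix (Fin n) (Fin n × Fin m) ℝ :=
  Matrix.of fun r q => if r = q.1 ∧ q.2 = i then 1 else 0

/-- The Kronecker product `a ⊗ I_q ∈ ℝ^{q×nq}` of a row vector `a ∈ ℝ^{1×n}`
with the identity `I_q`. -/
def aKron (a : Fin n → ℝ) (q : ℕ) : Matrix (Fin q) (Fin n × Fin q) ℝ :=
  Matrix.of fun i p => if i = p.2 then a p.1 else 0

/-- The row vector `a ∈ ℝ^{1×n}` as a `1 × n` matrix. -/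
def aRow (a : Fin n → ℝ) : Matrix (Fin 1) (Fin n) ℝ := Matrix.of fun _ k => a k

/-- The `i`-th row of `H` as a `1 × n` matrix. -/
def Hrow (H : Matrix (Fin m) (Fin n) ℝ) (i : Fin m) : Matrix (Fin 1) (Fin n) ℝ :=
  Matrix.of fun _ j => H i j

/-- The estimation matrix
`L_est = [[F_u − (a⊗I_n)M̃_u , F_y − (a⊗I_n)M̃_y]; [a⊗I_m , 0]] ∈ ℝ^{(n+m)×(m+l)n}`. -/
def Lest (E : Matrix (Fin n) (Fin n) ℝ) (F : Matrix (Fin n) (Fin m) ℝ)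
    (G : Matrix (Fin n) (Fin l) ℝ) (a : Fin n → ℝ) :
    Matrix (Fin n ⊕ Fin m) ((Fin n × Fin m) ⊕ (Fin n × Fin l)) ℝ :=
  Matrix.fromBlocks (Frow E F - aKron a n * Mlow E F) (Frow E G - aKron a n * Mlow E G)
    (aKron a m) 0

/-- A compensator trajectory: `x̂(t+1) = E x̂(t) + F u(t) + G y(t+1)`, `u(t) = H x̂(t)`. -/
def IsCompTraj (E : Matrix (Fin n) (Fin n) ℝ) (F : Matrix (Fin n) (Fin m) ℝ)
    (G : Matrix (Fin n) (Fin l) ℝ) (H : Matrix (Fin m) (Fin n) ℝ)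
    (xh : ℕ → Fin n → ℝ) (u : ℕ → Fin m → ℝ) (y : ℕ → Fin l → ℝ) : Prop :=
  (∀ t, xh (t + 1) = E.mulVec (xh t) + F.mulVec (u t) + G.mulVec (y (t + 1))) ∧
    ∀ t, u t = H.mulVec (xh t)

/-- The stacked vector `(v(t); v(t+1); …; v(t+r-1))`. -/
def stack {k : ℕ} (v : ℕ → Fin k → ℝ) (r t : ℕ) : Fin r × Fin k → ℝ :=
  fun p => v (t + (p.1 : ℕ)) p.2

/-- full row rank of the estimation matrix, proof of Theorem 3. -/
theorem Lest_full_row_rank (n m l : ℕ) (hn : 1 ≤ n) (hm : 1 ≤ m) (hl : 1 ≤ l)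
    (E : Matrix (Fin n) (Fin n) ℝ) (F : Matrix (Fin n) (Fin m) ℝ)
    (G : Matrix (Fin n) (Fin l) ℝ)
    (a : Fin n → ℝ) (ha : E ^ n = ∑ k : Fin n, a k • E ^ (k : ℕ))
    (hFy : (Frow E G - aKron a n * Mlow E G).rank = n) (ha0 : a ≠ 0) :
    (Lest E F G a).rank = n + m := by
  classical
  set B := Frow E G - aKron a n * Mlow E G with hBdef
  -- full row rank of B : any left kernel vector is zero
  have hBinj : ∀ v : Fin n → ℝ, v ᵥ* B = 0 → v = 0 := by
    intro v hv
    have h1 : Bᵀ.rank = n := by rw [Matrix.rank_transpose]; exact hFy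
    have hker : LinearMap.ker Bᵀ.mulVecLin = ⊥ := by
      have h2 := LinearMap.finrank_range_add_finrank_ker Bᵀ.mulVecLin
      rw [Matrix.rank] at h1
      rw [h1] at h2
      simp only [Module.finrank_pi, Fintype.card_fin] at h2
      have h3 : Module.finrank ℝ (LinearMap.ker Bᵀ.mulVecLin) = 0 := by omega
      exact Submodule.finrank_eq_zero.mp h3
    have hv' : Bᵀ.mulVecLin v = 0 := by
      rw [Matrix.mulVecLin_apply, Matrix.mulVec_transpose]
      exact hv
    have hvmem : v ∈ LinearMap.ker Bᵀ.mulVecLin := hv'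
    rw [hker] at hvmem
    simpa using hvmem
  -- a nonzero coordinate of a
  obtain ⟨k0, hk0⟩ : ∃ k, a k ≠ 0 := by
    by_contra h
    push_neg at h
    exact ha0 (funext fun k => h k)
  -- injectivity of the left-multiplication by Lest
  have hinj : Function.Injective (Lest E F G a)ᵀ.mulVecLin := by
    rw [← LinearMap.ker_eq_bot]
    rw [Submodule.eq_bot_iff]
    intro v hv
    rw [LinearMap.mem_ker, Matrix.mulVecLin_apply, Matrix.mulVec_transpose] at hv
    set v1 : Fin n → ℝ := fun i => v (Sum.inl i) with hv1
    set v2 : Fin m → ℝ := fun j => v (Sum.inr j) with hv2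
    -- right block gives v1 ᵥ* B = 0
    have hright : v1 ᵥ* B = 0 := by
      funext p
      have := congrFun hv (Sum.inr p)
      simp only [Matrix.vecMul, dotProduct, Pi.zero_apply] at this ⊢
      rw [Fintype.sum_sum_type] at this
      simp only [Lest, Matrix.fromBlocks_apply₁₂, Matrix.fromBlocks_apply₂₂,
        Matrix.zero_apply, mul_zero, Finset.sum_const_zero, add_zero] at this
      exact this
    have hv1z : v1 = 0 := hBinj v1 hright
    -- left block gives v2 = 0
    have hv2z : v2 = 0 := by
      funext j
      have := congrFun hv (Sum.inl (k0, j))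
      simp only [Matrix.vecMul, dotProduct, Pi.zero_apply] at this
      rw [Fintype.sum_sum_type] at this
      simp only [Lest, Matrix.fromBlocks_apply₁₁, Matrix.fromBlocks_apply₂₁] at this
      have h4 : ∀ i : Fin n, v (Sum.inl i) = 0 := fun i => congrFun hv1z i
      simp only [h4, zero_mul, Finset.sum_const_zero, zero_add] at this
      have h5 : ∀ j' : Fin m,
          v (Sum.inr j') * aKron a m j' (k0, j) =
            if j' = j then v (Sum.inr j') * a k0 else 0 := by
        intro j'
        simp only [aKron, Matrix.of_apply]
        by_cases h : j' = j <;> simp [h]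
      rw [Finset.sum_congr rfl (fun j' _ => h5 j')] at this
      rw [Finset.sum_ite_eq' Finset.univ j (fun j' => v (Sum.inr j') * a k0)] at this
      simp only [Finset.mem_univ, if_true] at this
      have := mul_eq_zero.mp this
      rcases this with h | h
      · exact h
      · exact absurd h hk0
    funext i
    cases i with
    | inl i => exact congrFun hv1z i
    | inr j => exact congrFun hv2z j
  -- conclude
  calc (Lest E F G a).rank = (Lest E F G a)ᵀ.rank := (Matrix.rank_transpose _).symm
    _ = Module.finrank ℝ (LinearMap.range (Lest E F G a)ᵀ.mulVecLin) := rfl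
    _ = Module.finrank ℝ ((Fin n ⊕ Fin m) → ℝ) := LinearMap.finrank_range_of_inj hinj
    _ = n + m := by simp [Module.finrank_pi]

end LQGPaper
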